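/- For every odd positive integer n and every even integer k, one has E_n(k) ≡ 0 (mod 4). -/

import Mathlib

noncomputable def Efun (n : ℕ) (x : ℚ) : ℚ :=
  (2 / (Nat.factorial (2 * n) : ℚ)) * ∏ ℓ ∈ Finset.range n, (x ^ 2 - (ℓ : ℚ) ^ 2)

lemma prod_desc (k : ℕ) : ∀ n : ℕ, n + 1 ≤ k →
    ∏ ℓ ∈ Finset.range (n + 1), ((k : ℤ) ^ 2 - (ℓ : ℤ) ^ 2)
      = (k : ℤ) * ((k + n).descFactorial (2 * n + 1) : ℤ) := by
  intro n
  induction n with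
  | zero => intro _; simp [Nat.descFactorial_one]; ring
  | succ n ih =>
    intro hk
    have hk' : n + 1 ≤ k := by omega
    rw [Finset.prod_range_succ, ih hk']
    have h1 : (k + (n + 1)).descFactorial (2 * (n + 1) + 1)
        = (k + n + 1) * ((k + n).descFactorial (2 * n + 2)) := by
      have : 2 * (n + 1) + 1 = (2 * n + 2) + 1 := by ring
      rw [this, show k + (n + 1) = (k + n) + 1 by ring, Nat.succ_descFactorial_succ]
    have h2 : (k + n).descFactorial (2 * n + 2)
        = (k - (n + 1)) * (k + n).descFactorial (2 * n + 1) := by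
      rw [Nat.descFactorial_succ]
      congr 1
      omega
    rw [h1, h2]
    have hc : ((k - (n + 1) : ℕ) : ℤ) = (k : ℤ) - ((n : ℤ) + 1) := by
      rw [Nat.cast_sub hk']
      push_cast
      ring
    push_cast [hc]
    ring

theorem stmt9 : ∀ n : ℕ, Odd n → 1 ≤ n → ∀ k : ℤ, Even k →
    ∃ z : ℤ, Efun n (k : ℚ) = 4 * z := by
  intro n hodd hn k hk
  set m : ℕ := k.natAbs with hm
  have hsq : (k : ℚ) ^ 2 = (m : ℚ) ^ 2 := by
    rw [hm]
    rw [Nat.cast_natAbs]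
    simp [sq_abs]
  have hE : Efun n (k : ℚ) = Efun n (m : ℚ) := by
    unfold Efun
    rw [hsq]
  rw [hE]
  have hmeven : Even m := by rw [hm]; exact Int.natAbs_even.mpr hk
  by_cases hcase : m < n
  · refine ⟨0, ?_⟩
    unfold Efun
    rw [Finset.prod_eq_zero (Finset.mem_range.mpr hcase) (by ring)]
    simp
  · push_neg at hcase
    obtain ⟨n', rfl⟩ : ∃ n', n = n' + 1 := ⟨n - 1, by omega⟩
    set A : ℕ := (m + (n' + 1)).choose (2 * (n' + 1)) with hA
    set B : ℕ := (m + n').choose (2 * n' + 1) with hB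
    have key : (m + n' + 1) * B = A * (2 * (n' + 1)) := by
      have := Nat.add_one_mul_choose_eq (m + n') (2 * n' + 1)
      simpa [hA, hB, Nat.succ_eq_add_one, show m + n' + 1 = m + (n' + 1) by ring,
        show 2 * n' + 1 + 1 = 2 * (n' + 1) by ring] using this
    have hBeven : 2 ∣ B := by
      have hoddsum : (m + n' + 1) % 2 = 1 := by
        obtain ⟨c, hc⟩ := hodd
        obtain ⟨d, hd⟩ := hmeven
        omega
      have hdvd : 2 ∣ (m + n' + 1) * B := by
        rw [key]; exact ⟨A * (n' + 1), by ring⟩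
      exact (Nat.Coprime.dvd_of_dvd_mul_left
        (by simpa [Nat.coprime_two_left] using Nat.odd_iff.mpr hoddsum) hdvd)
    set E : ℤ := 2 * (A : ℤ) - (B : ℤ) with hEdef
    have hnE : ((n' : ℤ) + 1) * E = (m : ℤ) * B := by
      have hkey : ((m : ℤ) + n' + 1) * B = (A : ℤ) * (2 * (n' + 1)) := by exact_mod_cast key
      rw [hEdef]; linarith [hkey]
    have hEq : Efun (n' + 1) (m : ℚ) = (E : ℚ) := by
      unfold Efun
      have hp : ∏ ℓ ∈ Finset.range (n' + 1), ((m : ℚ) ^ 2 - (ℓ : ℚ) ^ 2)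
          = ((m : ℤ) : ℚ) * (((m + n').descFactorial (2 * n' + 1) : ℤ) : ℚ) := by
        exact_mod_cast congrArg (fun z : ℤ => (z : ℚ)) (prod_desc m n' (by omega))
      rw [hp]
      have hdfQ : (((m + n').descFactorial (2 * n' + 1) : ℤ) : ℚ)
          = ((2 * n' + 1).factorial : ℚ) * (B : ℚ) := by
        exact_mod_cast Nat.descFactorial_eq_factorial_mul_choose (m + n') (2 * n' + 1)
      have hfactQ : ((2 * (n' + 1)).factorial : ℚ)
          = (2 * ((n' : ℚ) + 1)) * ((2 * n' + 1).factorial : ℚ) := by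
        rw [show 2 * (n' + 1) = (2 * n' + 1) + 1 by ring, Nat.factorial_succ]
        push_cast
        ring
      have hnEq : ((n' : ℚ) + 1) * (E : ℚ) = (m : ℚ) * (B : ℚ) := by exact_mod_cast hnE
      rw [hdfQ, hfactQ]
      have h1 : ((2 * n' + 1).factorial : ℚ) ≠ 0 := by positivity
      have h2 : ((n' : ℚ) + 1) ≠ 0 := by positivity
      push_cast
      field_simp
      nlinarith [hnEq, Nat.factorial_pos (2 * n' + 1), h1]
    have h4 : (4 : ℤ) ∣ E := by
      obtain ⟨d, hd⟩ := hmeven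
      obtain ⟨B', hB'⟩ := hBeven
      have h4nE : (4 : ℤ) ∣ ((n' : ℤ) + 1) * E := by
        rw [hnE, hd, hB']
        push_cast
        exact ⟨d * B', by ring⟩
      have hcop : IsCoprime (4 : ℤ) ((n' : ℤ) + 1) := by
        have hc4 : Nat.Coprime 4 (n' + 1) := by
          have h2 : Nat.Coprime 2 (n' + 1) := by
            simpa [Nat.coprime_two_left] using hodd
          simpa [show (4 : ℕ) = 2 ^ 2 by norm_num] using Nat.Coprime.pow_left 2 h2
        rw [Int.isCoprime_iff_gcd_eq_one]
        rw [show ((n' : ℤ) + 1) = ((n' + 1 : ℕ) : ℤ) by push_cast; ring,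
          show (4 : ℤ) = ((4 : ℕ) : ℤ) by norm_num, Int.gcd_natCast_natCast]
        exact hc4
      exact hcop.dvd_of_dvd_mul_left h4nE
    obtain ⟨z, hz⟩ := h4
    refine ⟨z, ?_⟩
    rw [hEq, hz]
    push_cast
    ring
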